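/- arXiv:2508.03192 — 7 statements merged into one kernel-verified Lean document; each statement's English description precedes it below -/
import Mathlib

section
/- Let ρ, A, B be n×n complex matrices with B Hermitian (Bᴴ = B). Then tr(ρ·[A,B]) = −i · ( 4·tr( ((I + i·Bᴴ)/2) · ρ · ((I − i·B)/2) · A ) − tr(ρ·A) − tr(Bᴴ·ρ·B·A) ). -/
open Matrix Complex

/-- For n×n complex matrices ρ, A, B with B Hermitian,
tr(ρ·[A,B]) = −i·( 4·tr( ((I + i·Bᴴ)/2) · ρ · ((I − i·B)/2) · A ) − tr(ρ·A) − tr(Bᴴ·ρ·B·A) ). -/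
theorem commutator_reformulation {n : ℕ} (hn : 1 ≤ n)
    (ρ A B : Matrix (Fin n) (Fin n) ℂ) (hB : Bᴴ = B) :
    Matrix.trace (ρ * (A * B - B * A)) =
      (-Complex.I) *
        (4 * Matrix.trace
            (((1 / 2 : ℂ) • ((1 : Matrix (Fin n) (Fin n) ℂ) + Complex.I • Bᴴ)) * ρ *
              ((1 / 2 : ℂ) • ((1 : Matrix (Fin n) (Fin n) ℂ) - Complex.I • B)) * A)
          - Matrix.trace (ρ * A)
          - Matrix.trace (Bᴴ * ρ * B * A)) := by
  rw [hB]
  have h1 : Matrix.trace (ρ * (A * B)) = Matrix.trace (B * ρ * A) := by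
    rw [← mul_assoc, Matrix.trace_mul_cycle]
  simp only [mul_add, add_mul, mul_sub, sub_mul, smul_mul_assoc, mul_smul_comm, one_mul,
    mul_one, trace_add, trace_sub, trace_smul, smul_smul, smul_eq_mul, mul_assoc]
  rw [h1]
  have h3 : (Complex.I : ℂ) ^ 3 = -Complex.I := by
    rw [pow_succ, Complex.I_sq]; ring
  ring_nf
  simp only [h3, Complex.I_sq, mul_assoc]
  ring
end

section
/- Let ρ, A, B, H be n×n complex matrices with B Hermitian and B·B = I, and let t be a real number. Set A(t) := exp(i·t·H)·A·exp(−i·t·H). Then tr(ρ·[A(t),B]) = −i · ( 2·tr( exp(−i·t·H)·exp(i·(π/4)·B)·ρ·exp(−i·(π/4)·B)·exp(i·t·H)·A ) − tr( exp(−i·t·H)·ρ·exp(i·t·H)·A ) − tr( exp(−i·t·H)·B·ρ·B·exp(i·t·H)·A ) ). -/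
open Matrix Complex NormedSpace
open scoped Nat

lemma exp_I_smul_sq_one {n : ℕ} (B : Matrix (Fin n) (Fin n) ℂ) (hB2 : B * B = 1) (z : ℂ) :
    NormedSpace.exp ((Complex.I * z) • B) =
      Complex.cos z • (1 : Matrix (Fin n) (Fin n) ℂ) + (Complex.sin z * Complex.I) • B := by
  letI : SeminormedRing (Matrix (Fin n) (Fin n) ℂ) := Matrix.linftyOpSemiNormedRing
  letI : NormedRing (Matrix (Fin n) (Fin n) ℂ) := Matrix.linftyOpNormedRing
  letI : NormedAlgebra ℂ (Matrix (Fin n) (Fin n) ℂ) := Matrix.linftyOpNormedAlgebra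
  have hmain := exp_series_hasSum_exp' (𝕂 := ℂ) ((Complex.I * z) • B)
  have hBsq : B ^ 2 = 1 := by rw [sq, hB2]
  have hBeven : ∀ k : ℕ, B ^ (2 * k) = 1 := fun k => by rw [pow_mul, hBsq, one_pow]
  have hBodd : ∀ k : ℕ, B ^ (2 * k + 1) = B := fun k => by
    rw [pow_succ, pow_mul, hBsq, one_pow, one_mul]
  have key : HasSum (fun k : ℕ => ((k ! : ℂ))⁻¹ • ((Complex.I * z) • B) ^ k)
      (Complex.cos z • (1 : Matrix (Fin n) (Fin n) ℂ) + (Complex.sin z * Complex.I) • B) := by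
    refine HasSum.even_add_odd ?_ ?_
    · have := (Complex.hasSum_cos' z).smul_const (1 : Matrix (Fin n) (Fin n) ℂ)
      convert this using 2 with k
      rw [smul_pow, hBeven, smul_smul]
      congr 1
      rw [mul_comm Complex.I z]
      ring
    · have := ((Complex.hasSum_sin' z).mul_right Complex.I).smul_const B
      convert this using 2 with k
      rw [smul_pow, hBodd, smul_smul]
      congr 1
      rw [mul_comm Complex.I z]
      rw [div_mul_cancel₀ _ Complex.I_ne_zero]
      ring
  exact hmain.unique key

/-- Measurable representation of the commutator correlation function. -/
theorem commutator_measurable_representation {n : ℕ} (hn : 1 ≤ n)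
    (ρ A B H : Matrix (Fin n) (Fin n) ℂ) (hB : Bᴴ = B)
    (hB2 : B * B = 1) (t : ℝ) :
    Matrix.trace (ρ *
        ((NormedSpace.exp ((Complex.I * (t : ℂ)) • H) * A * NormedSpace.exp ((-(Complex.I * (t : ℂ))) • H)) * B
          - B * (NormedSpace.exp ((Complex.I * (t : ℂ)) • H) * A * NormedSpace.exp ((-(Complex.I * (t : ℂ))) • H)))) =
      (-Complex.I) *
        (2 * Matrix.trace
            (NormedSpace.exp ((-(Complex.I * (t : ℂ))) • H) *
              NormedSpace.exp ((Complex.I * ((Real.pi : ℂ) / 4)) • B) * ρ *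
              NormedSpace.exp ((-(Complex.I * ((Real.pi : ℂ) / 4))) • B) *
              NormedSpace.exp ((Complex.I * (t : ℂ)) • H) * A)
          - Matrix.trace
              (NormedSpace.exp ((-(Complex.I * (t : ℂ))) • H) * ρ * NormedSpace.exp ((Complex.I * (t : ℂ)) • H) * A)
          - Matrix.trace
              (NormedSpace.exp ((-(Complex.I * (t : ℂ))) • H) * B * ρ * B *
                NormedSpace.exp ((Complex.I * (t : ℂ)) • H) * A)) := by
  set U := NormedSpace.exp ((Complex.I * (t : ℂ)) • H) with hU
  set V := NormedSpace.exp ((-(Complex.I * (t : ℂ))) • H) with hV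
  set c : ℂ := ((Real.sqrt 2 / 2 : ℝ) : ℂ) with hcdef
  have hc2 : c * c = 1/2 := by
    rw [hcdef]
    norm_cast
    rw [div_mul_div_comm, Real.mul_self_sqrt (by norm_num)]
    norm_num
  have hcos : Complex.cos ((Real.pi : ℂ) / 4) = c := by
    rw [show ((Real.pi : ℂ) / 4) = ((Real.pi / 4 : ℝ) : ℂ) by push_cast; ring,
      ← Complex.ofReal_cos, Real.cos_pi_div_four]
  have hsin : Complex.sin ((Real.pi : ℂ) / 4) = c := by
    rw [show ((Real.pi : ℂ) / 4) = ((Real.pi / 4 : ℝ) : ℂ) by push_cast; ring,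
      ← Complex.ofReal_sin, Real.sin_pi_div_four]
  have hE : NormedSpace.exp ((Complex.I * ((Real.pi : ℂ) / 4)) • B)
      = c • (1 : Matrix (Fin n) (Fin n) ℂ) + (c * Complex.I) • B := by
    rw [exp_I_smul_sq_one B hB2, hcos, hsin]
  have hF : NormedSpace.exp ((-(Complex.I * ((Real.pi : ℂ) / 4))) • B)
      = c • (1 : Matrix (Fin n) (Fin n) ℂ) + (-(c * Complex.I)) • B := by
    rw [show (-(Complex.I * ((Real.pi : ℂ) / 4))) = Complex.I * (-((Real.pi : ℂ) / 4)) by ring,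
      exp_I_smul_sq_one B hB2, Complex.cos_neg, Complex.sin_neg, hcos, hsin]
    ring_nf
  rw [hE, hF]
  simp only [Matrix.mul_add, Matrix.add_mul, Matrix.mul_sub, Matrix.sub_mul, Matrix.smul_mul,
    Matrix.mul_smul, Matrix.mul_one, Matrix.one_mul, Matrix.trace_add, Matrix.trace_sub,
    Matrix.trace_smul, smul_smul, smul_eq_mul, mul_assoc]
  have h3 : (V * (B * (ρ * (U * A)))).trace = (ρ * (U * (A * (V * B)))).trace := by
    simpa [mul_assoc] using Matrix.trace_mul_comm (V*B) (ρ*(U*A))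
  have h2 : (V * (ρ * (B * (U * A)))).trace = (ρ * (B * (U * (A * V)))).trace := by
    simpa [mul_assoc] using Matrix.trace_mul_comm V (ρ*(B*(U*A)))
  rw [h2, h3]
  linear_combination
    (2*Complex.I*((V * (ρ * (U * A))).trace) + 2*Complex.I^2*((ρ * (U * (A * (V * B)))).trace)
      - 2*Complex.I^2*((ρ * (B * (U * (A * V)))).trace)
      - 2*Complex.I^3*((V * (B * (ρ * (B * (U * A))))).trace)) * hc2
    + ((ρ * (U * (A * (V * B)))).trace - (ρ * (B * (U * (A * V)))).trace
      - Complex.I*((V * (B * (ρ * (B * (U * A))))).trace)) * Complex.I_sq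
end

section
/- Let ρ, A, B, H be n×n complex matrices with B Hermitian and B·B = I, and let t be a real number. Set A(t) := exp(i·t·H)·A·exp(−i·t·H), c₊ := tr( ((I + B)/2) · ρ · ((I + B)/2) ), and assume c₊ ≠ 0. Define ρ₊ := c₊⁻¹ · exp(−i·t·H) · ((I + B)/2) · ρ · ((I + B)/2) · exp(i·t·H). Then tr(ρ·{A(t),B}) = 4·c₊·tr(ρ₊·A) − tr( exp(−i·t·H)·ρ·exp(i·t·H)·A ) − tr( exp(−i·t·H)·B·ρ·B·exp(i·t·H)·A ). -/
open Matrix Complex NormedSpace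

/-- Plus representation of the anti-commutator correlation function with
uncontrolled time evolution: with c₊ = tr(((I+B)/2)·ρ·((I+B)/2)) ≠ 0 and
ρ₊ = c₊⁻¹ · e^{−iHt}·((I+B)/2)·ρ·((I+B)/2)·e^{iHt}, one has
tr(ρ·{A(t),B}) = 4·c₊·tr(ρ₊·A) − tr(e^{−iHt}·ρ·e^{iHt}·A) − tr(e^{−iHt}·B·ρ·B·e^{iHt}·A). -/
theorem anticommutator_plus_representation {n : ℕ} (hn : 1 ≤ n)
    (ρ A B H : Matrix (Fin n) (Fin n) ℂ) (hB : Bᴴ = B) (hB2 : B * B = 1) (t : ℝ)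
    (At : Matrix (Fin n) (Fin n) ℂ)
    (hAt : At = NormedSpace.exp ((Complex.I * (t : ℂ)) • H) * A * NormedSpace.exp ((-(Complex.I * (t : ℂ))) • H))
    (c : ℂ)
    (hc : c = Matrix.trace
        (((1 / 2 : ℂ) • ((1 : Matrix (Fin n) (Fin n) ℂ) + B)) * ρ *
          ((1 / 2 : ℂ) • ((1 : Matrix (Fin n) (Fin n) ℂ) + B))))
    (hc0 : c ≠ 0)
    (ρplus : Matrix (Fin n) (Fin n) ℂ)
    (hρplus : ρplus = c⁻¹ •
        (NormedSpace.exp ((-(Complex.I * (t : ℂ))) • H) *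
          ((1 / 2 : ℂ) • ((1 : Matrix (Fin n) (Fin n) ℂ) + B)) * ρ *
          ((1 / 2 : ℂ) • ((1 : Matrix (Fin n) (Fin n) ℂ) + B)) *
          NormedSpace.exp ((Complex.I * (t : ℂ)) • H))) :
    Matrix.trace (ρ * (At * B + B * At)) =
      4 * c * Matrix.trace (ρplus * A)
        - Matrix.trace
            (NormedSpace.exp ((-(Complex.I * (t : ℂ))) • H) * ρ * NormedSpace.exp ((Complex.I * (t : ℂ)) • H) * A)
        - Matrix.trace
            (NormedSpace.exp ((-(Complex.I * (t : ℂ))) • H) * B * ρ * B *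
              NormedSpace.exp ((Complex.I * (t : ℂ)) • H) * A) := by
  subst hAt hρplus
  set E := NormedSpace.exp ((Complex.I * (t : ℂ)) • H) with hE
  set E' := NormedSpace.exp ((-(Complex.I * (t : ℂ))) • H) with hE'
  have hsmul :
      E' * ((1 / 2 : ℂ) • ((1 : Matrix (Fin n) (Fin n) ℂ) + B)) * ρ *
          ((1 / 2 : ℂ) • ((1 : Matrix (Fin n) (Fin n) ℂ) + B)) * E
        = (1 / 4 : ℂ) • (E' * (1 + B) * ρ * (1 + B) * E) := by
    simp only [Matrix.mul_smul, Matrix.smul_mul, smul_smul]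
    norm_num
  have hcA : 4 * c * Matrix.trace
      ((c⁻¹ • (E' * ((1 / 2 : ℂ) • ((1 : Matrix (Fin n) (Fin n) ℂ) + B)) * ρ *
          ((1 / 2 : ℂ) • ((1 : Matrix (Fin n) (Fin n) ℂ) + B)) * E)) * A)
      = Matrix.trace (E' * (1 + B) * ρ * (1 + B) * E * A) := by
    rw [hsmul, smul_smul, Matrix.smul_mul, Matrix.trace_smul, smul_eq_mul]
    field_simp
  rw [hcA]
  have hexp : Matrix.trace (E' * (1 + B) * ρ * (1 + B) * E * A)
      = Matrix.trace (E' * ρ * E * A) + Matrix.trace (E' * ρ * B * E * A)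
        + Matrix.trace (E' * B * ρ * E * A) + Matrix.trace (E' * B * ρ * B * E * A) := by
    simp only [Matrix.mul_add, Matrix.add_mul, Matrix.mul_one, Matrix.one_mul, Matrix.trace_add]
    abel
  have h1 : Matrix.trace (ρ * (E * A * E' * B)) = Matrix.trace (E' * B * ρ * E * A) := by
    rw [show ρ * (E * A * E' * B) = (ρ * E * A) * (E' * B) by noncomm_ring,
        Matrix.trace_mul_comm,
        show (E' * B) * (ρ * E * A) = E' * B * ρ * E * A by noncomm_ring]
  have h2 : Matrix.trace (ρ * (B * (E * A * E'))) = Matrix.trace (E' * ρ * B * E * A) := by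
    rw [show ρ * (B * (E * A * E')) = (ρ * B * E * A) * E' by noncomm_ring,
        Matrix.trace_mul_comm,
        show E' * (ρ * B * E * A) = E' * ρ * B * E * A by noncomm_ring]
  rw [Matrix.mul_add, Matrix.trace_add, h1, h2, hexp]
  ring
end

section
/- Let ρ, A, B, H be n×n complex matrices with B Hermitian and B·B = I, and let t be a real number. Set A(t) := exp(i·t·H)·A·exp(−i·t·H), c₋ := tr( ((I − B)/2) · ρ · ((I − B)/2) ), and assume c₋ ≠ 0. Define ρ₋ := c₋⁻¹ · exp(−i·t·H) · ((I − B)/2) · ρ · ((I − B)/2) · exp(i·t·H). Then tr(ρ·{A(t),B}) = −4·c₋·tr(ρ₋·A) + tr( exp(−i·t·H)·ρ·exp(i·t·H)·A ) + tr( exp(−i·t·H)·B·ρ·B·exp(i·t·H)·A ). -/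
open Matrix Complex NormedSpace

/-- Minus representation of the anti-commutator correlation function with
uncontrolled time evolution: with c₋ = tr(((I−B)/2)·ρ·((I−B)/2)) ≠ 0 and
ρ₋ = c₋⁻¹ · e^{−iHt}·((I−B)/2)·ρ·((I−B)/2)·e^{iHt}, one has
tr(ρ·{A(t),B}) = −4·c₋·tr(ρ₋·A) + tr(e^{−iHt}·ρ·e^{iHt}·A) + tr(e^{−iHt}·B·ρ·B·e^{iHt}·A). -/
theorem anticommutator_minus_representation {n : ℕ} (hn : 1 ≤ n)
    (ρ A B H : Matrix (Fin n) (Fin n) ℂ) (hB : Bᴴ = B) (hB2 : B * B = 1) (t : ℝ)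
    (At : Matrix (Fin n) (Fin n) ℂ)
    (hAt : At = exp ((Complex.I * (t : ℂ)) • H) * A * exp ((-(Complex.I * (t : ℂ))) • H))
    (c : ℂ)
    (hc : c = Matrix.trace
        (((1 / 2 : ℂ) • ((1 : Matrix (Fin n) (Fin n) ℂ) - B)) * ρ *
          ((1 / 2 : ℂ) • ((1 : Matrix (Fin n) (Fin n) ℂ) - B))))
    (hc0 : c ≠ 0)
    (ρminus : Matrix (Fin n) (Fin n) ℂ)
    (hρminus : ρminus = c⁻¹ •
        (exp ((-(Complex.I * (t : ℂ))) • H) *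
          ((1 / 2 : ℂ) • ((1 : Matrix (Fin n) (Fin n) ℂ) - B)) * ρ *
          ((1 / 2 : ℂ) • ((1 : Matrix (Fin n) (Fin n) ℂ) - B)) *
          exp ((Complex.I * (t : ℂ)) • H))) :
    Matrix.trace (ρ * (At * B + B * At)) =
      -4 * c * Matrix.trace (ρminus * A)
        + Matrix.trace
            (exp ((-(Complex.I * (t : ℂ))) • H) * ρ * exp ((Complex.I * (t : ℂ)) • H) * A)
        + Matrix.trace
            (exp ((-(Complex.I * (t : ℂ))) • H) * B * ρ * B *
              exp ((Complex.I * (t : ℂ)) • H) * A) := by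
  subst hAt hρminus
  set E := exp ((Complex.I * (t : ℂ)) • H) with hE
  set F := exp ((-(Complex.I * (t : ℂ))) • H) with hF
  have hexp : (F * ((1 / 2 : ℂ) • ((1 : Matrix (Fin n) (Fin n) ℂ) - B)) * ρ *
      ((1 / 2 : ℂ) • ((1 : Matrix (Fin n) (Fin n) ℂ) - B)) * E) * A
      = (1/4 : ℂ) • (F * ρ * E * A - F * B * ρ * E * A - F * ρ * B * E * A
          + F * B * ρ * B * E * A) := by
    simp only [Matrix.smul_mul, Matrix.mul_smul, Matrix.sub_mul, Matrix.mul_sub,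
      Matrix.one_mul, Matrix.mul_one, smul_sub, smul_add, smul_smul, mul_assoc]
    module
  rw [Matrix.smul_mul, Matrix.trace_smul, hexp, Matrix.trace_smul, smul_smul]
  simp only [Matrix.trace_sub, Matrix.trace_add]
  have h1 : Matrix.trace (ρ * (E * A * F * B)) = Matrix.trace (F * B * ρ * E * A) := by
    rw [show ρ * (E * A * F * B) = (ρ * (E * A)) * (F * B) by noncomm_ring,
      Matrix.trace_mul_comm]
    congr 1; noncomm_ring
  have h2 : Matrix.trace (ρ * (B * (E * A * F))) = Matrix.trace (F * ρ * B * E * A) := by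
    rw [show ρ * (B * (E * A * F)) = (ρ * (B * (E * A))) * F by noncomm_ring,
      Matrix.trace_mul_comm]
    congr 1; noncomm_ring
  rw [Matrix.mul_add, Matrix.trace_add, h1, h2]
  field_simp
  have hcc : c * c⁻¹ = 1 := mul_inv_cancel₀ hc0
  linear_combination (-(F*B*ρ*E*A).trace - (F*ρ*B*E*A).trace + (F*ρ*E*A).trace + (F*B*ρ*B*E*A).trace) * hcc
end

section
/- Let P₀, P₁, …, P_{m−1} be n×n complex matrices that pairwise anticommute: Pᵢ·Pⱼ = −Pⱼ·Pᵢ whenever i ≠ j. Define Qᵢ := Pᵢ ⊗ P_{i+1} for 0 ≤ i ≤ m−2. Then the Qᵢ mutually commute: Qᵢ·Qⱼ = Qⱼ·Qᵢ for all 0 ≤ i, j ≤ m−2. -/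
open Matrix Kronecker

/-- For pairwise anticommuting matrices P₀,…,P_{m−1}, the chained
two-copy observables Qᵢ = Pᵢ ⊗ P_{i+1} mutually commute. -/
theorem chained_observables_commute {n m : ℕ}
    (P : Fin m → Matrix (Fin n) (Fin n) ℂ)
    (hanti : ∀ i j : Fin m, i ≠ j → P i * P j = -(P j * P i))
    (i j : ℕ) (hi : i + 1 < m) (hj : j + 1 < m) :
    (P ⟨i, Nat.lt_of_succ_lt hi⟩ ⊗ₖ P ⟨i + 1, hi⟩) *
        (P ⟨j, Nat.lt_of_succ_lt hj⟩ ⊗ₖ P ⟨j + 1, hj⟩) =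
      (P ⟨j, Nat.lt_of_succ_lt hj⟩ ⊗ₖ P ⟨j + 1, hj⟩) *
        (P ⟨i, Nat.lt_of_succ_lt hi⟩ ⊗ₖ P ⟨i + 1, hi⟩) := by
  rcases eq_or_ne i j with rfl | hij
  · rfl
  · have h1 : (⟨i, Nat.lt_of_succ_lt hi⟩ : Fin m) ≠ ⟨j, Nat.lt_of_succ_lt hj⟩ := by
      simp [Fin.ext_iff, hij]
    have h2 : (⟨i + 1, hi⟩ : Fin m) ≠ ⟨j + 1, hj⟩ := by
      simp [Fin.ext_iff, hij]
    rw [← Matrix.mul_kronecker_mul, ← Matrix.mul_kronecker_mul,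
      hanti _ _ h1, hanti _ _ h2]
    ext a b
    simp [Matrix.kroneckerMap_apply]
end

section
/- Let P₀, …, P_{m−1} be n×n complex matrices that are Hermitian (Pᵢᴴ = Pᵢ), satisfy Pᵢ·Pᵢ = I, and pairwise anticommute (Pᵢ·Pⱼ = −Pⱼ·Pᵢ for i ≠ j). Let ρ be an n×n positive semidefinite Hermitian matrix with tr ρ = 1. Then ∑_{i<m} |tr(ρ·Pᵢ)|² ≤ 1. -/
open Matrix ComplexOrder

lemma trace_conjTranspose_mul_self_nonneg {n k : ℕ} (M : Matrix (Fin k) (Fin n) ℂ) :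
    0 ≤ Matrix.trace (Mᴴ * M) := by
  rw [Matrix.trace]
  apply Finset.sum_nonneg
  intro i _
  rw [Matrix.diag]
  simp only [Matrix.mul_apply, Matrix.conjTranspose_apply]
  exact Finset.sum_nonneg fun j _ => star_mul_self_nonneg _

lemma trace_mul_psd_nonneg {n : ℕ} {ρ A : Matrix (Fin n) (Fin n) ℂ}
    (hρ : ρ.PosSemidef) (hA : A.PosSemidef) : 0 ≤ Matrix.trace (ρ * A) := by
  obtain ⟨C, rfl⟩ : ∃ C : Matrix (Fin n) (Fin n) ℂ, ρ = Cᴴ * C := by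
    open scoped MatrixOrder in
    exact CStarAlgebra.nonneg_iff_eq_star_mul_self.mp hρ.nonneg
  obtain ⟨D, rfl⟩ : ∃ D : Matrix (Fin n) (Fin n) ℂ, A = Dᴴ * D := by
    open scoped MatrixOrder in
    exact CStarAlgebra.nonneg_iff_eq_star_mul_self.mp hA.nonneg
  have h : Matrix.trace (Cᴴ * C * (Dᴴ * D)) = Matrix.trace ((D * Cᴴ)ᴴ * (D * Cᴴ)) := by
    rw [Matrix.mul_assoc, Matrix.trace_mul_comm, Matrix.conjTranspose_mul,
      Matrix.conjTranspose_conjTranspose]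
    rw [Matrix.mul_assoc, Matrix.mul_assoc, Matrix.mul_assoc]
  rw [h]
  exact trace_conjTranspose_mul_self_nonneg _

/-- For pairwise anticommuting Hermitian unitary observables P₀,…,P_{m−1}
and a density matrix ρ, the squared expectation values satisfy ∑ᵢ |tr(ρ·Pᵢ)|² ≤ 1. -/
theorem anticommuting_expectations_bound {n m : ℕ}
    (P : Fin m → Matrix (Fin n) (Fin n) ℂ)
    (hHerm : ∀ i, (P i)ᴴ = P i)
    (hUnit : ∀ i, P i * P i = 1)
    (hanti : ∀ i j : Fin m, i ≠ j → P i * P j = -(P j * P i))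
    (ρ : Matrix (Fin n) (Fin n) ℂ) (hρ : ρ.PosSemidef) (hρtr : Matrix.trace ρ = 1) :
    ∑ i, ‖Matrix.trace (ρ * P i)‖ ^ 2 ≤ 1 := by
  set t : Fin m → ℝ := fun i => (Matrix.trace (ρ * P i)).re with ht
  have hreal : ∀ i, Matrix.trace (ρ * P i) = (t i : ℂ) := by
    intro i
    have h1 : star (Matrix.trace (ρ * P i)) = Matrix.trace (ρ * P i) := by
      rw [← Matrix.trace_conjTranspose, Matrix.conjTranspose_mul, hHerm, hρ.1,
        Matrix.trace_mul_comm]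
    rw [Complex.star_def] at h1
    exact (Complex.conj_eq_iff_re.mp h1).symm
  have hgoal : ∀ i, ‖Matrix.trace (ρ * P i)‖ ^ 2 = t i ^ 2 := by
    intro i
    rw [hreal i, Complex.norm_real, Real.norm_eq_abs, sq_abs]
  simp only [hgoal]
  set s : ℝ := ∑ i, t i ^ 2 with hsdef
  have hs0 : 0 ≤ s := Finset.sum_nonneg fun i _ => sq_nonneg _
  rcases eq_or_lt_of_le hs0 with hs | hs
  · linarith
  -- Q = ∑ tᵢ • Pᵢ
  set Q : Matrix (Fin n) (Fin n) ℂ := ∑ i, (t i : ℂ) • P i with hQdef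
  have hQH : Qᴴ = Q := by
    rw [hQdef, Matrix.conjTranspose_sum]
    refine Finset.sum_congr rfl fun i _ => ?_
    rw [Matrix.conjTranspose_smul, hHerm, Complex.star_def, Complex.conj_ofReal]
  have hQ2 : Q * Q = (s : ℂ) • 1 := by
    have hdouble : Q * Q + Q * Q = ((2 * s : ℝ) : ℂ) • 1 := by
      rw [hQdef, Finset.sum_mul_sum]
      nth_rewrite 2 [Finset.sum_comm]
      simp only [← Finset.sum_add_distrib]
      have hterm : ∀ i j : Fin m, ((t i : ℂ) • P i) * ((t j : ℂ) • P j)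
          + ((t j : ℂ) • P j) * ((t i : ℂ) • P i)
          = if i = j then ((2 * t i ^ 2 : ℝ) : ℂ) • 1 else 0 := by
        intro i j
        rw [Matrix.smul_mul, Matrix.smul_mul, Matrix.mul_smul, Matrix.mul_smul,
          smul_smul, smul_smul]
        by_cases hij : i = j
        · subst hij
          rw [if_pos rfl, hUnit, ← add_smul]
          congr 1
          push_cast
          ring
        · rw [if_neg hij, hanti i j hij, mul_comm ((t j : ℂ)) ((t i : ℂ)),
            smul_neg, neg_add_cancel]
      simp only [hterm, Finset.sum_ite_eq, Finset.mem_univ, if_pos]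
      rw [← Finset.sum_smul]
      congr 1
      rw [hsdef]
      push_cast [Finset.mul_sum]
      rfl
    have h2 : ((2 * s : ℝ) : ℂ) • (1 : Matrix (Fin n) (Fin n) ℂ)
        = (2 : ℂ) • ((s : ℂ) • 1) := by
      rw [smul_smul]
      push_cast
      ring_nf
    rw [h2, ← two_smul ℂ (Q * Q)] at hdouble
    exact smul_right_injective (Matrix (Fin n) (Fin n) ℂ) two_ne_zero hdouble
  set r : ℝ := Real.sqrt s with hrdef
  have hr0 : 0 < r := Real.sqrt_pos.mpr hs
  have hrr : (r : ℂ) * (r : ℂ) = (s : ℂ) := by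
    rw [← Complex.ofReal_mul, Real.mul_self_sqrt hs0]
  set A : Matrix (Fin n) (Fin n) ℂ := (r : ℂ) • 1 - Q with hAdef
  have hAH : Aᴴ = A := by
    rw [hAdef, Matrix.conjTranspose_sub, Matrix.conjTranspose_smul, hQH,
      Matrix.conjTranspose_one, Complex.star_def, Complex.conj_ofReal]
  have hA2 : A * A = ((2 * r : ℝ) : ℂ) • A := by
    set R : Matrix (Fin n) (Fin n) ℂ := (r : ℂ) • 1 with hRdef
    have h1 : (R - Q) * (R - Q) = R * R - R * Q - Q * R + Q * Q := by noncomm_ring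
    have hRR : R * R = (s : ℂ) • 1 := by
      rw [hRdef, Matrix.smul_mul, Matrix.mul_smul, Matrix.one_mul, smul_smul, hrr]
    have hRQ : R * Q = (r : ℂ) • Q := by rw [hRdef, Matrix.smul_mul, Matrix.one_mul]
    have hQR : Q * R = (r : ℂ) • Q := by rw [hRdef, Matrix.mul_smul, Matrix.mul_one]
    rw [hAdef, h1, hRR, hRQ, hQR, hQ2,
      show ((2 * r : ℝ) : ℂ) = 2 * (r : ℂ) from by push_cast; ring,
      smul_sub, hRdef, smul_smul, mul_assoc, hrr,
      two_mul (s : ℂ), two_mul (r : ℂ), add_smul, add_smul]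
    abel
  have hApsd : A.PosSemidef := by
    set c : ℝ := 2 * r with hcdef
    have hc : 0 < c := by positivity
    set B : Matrix (Fin n) (Fin n) ℂ := ((Real.sqrt c⁻¹ : ℝ) : ℂ) • A with hBdef
    have hB : Bᴴ * B = A := by
      rw [hBdef, Matrix.conjTranspose_smul, hAH, Complex.star_def, Complex.conj_ofReal,
        Matrix.smul_mul, Matrix.mul_smul, smul_smul, hA2, smul_smul,
        ← Complex.ofReal_mul, ← Complex.ofReal_mul,
        Real.mul_self_sqrt (by positivity), inv_mul_cancel₀ (ne_of_gt hc),
        Complex.ofReal_one, one_smul]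
    exact hB ▸ Matrix.posSemidef_conjTranspose_mul_self B
  have htrQ : Matrix.trace (ρ * Q) = (s : ℂ) := by
    rw [hQdef, Finset.mul_sum, Matrix.trace_sum]
    simp only [Matrix.mul_smul, Matrix.trace_smul, hreal]
    rw [hsdef]
    push_cast
    refine Finset.sum_congr rfl fun i _ => ?_
    rw [smul_eq_mul]
    ring
  have htrA : Matrix.trace (ρ * A) = ((r - s : ℝ) : ℂ) := by
    rw [hAdef, mul_sub, Matrix.trace_sub, Matrix.mul_smul, Matrix.mul_one,
      Matrix.trace_smul, hρtr, htrQ, smul_eq_mul, mul_one]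
    push_cast
    ring
  have hpos : (0 : ℂ) ≤ ((r - s : ℝ) : ℂ) := htrA ▸ trace_mul_psd_nonneg hρ hApsd
  have hrs : s ≤ r := by
    have := Complex.zero_le_real.mp hpos
    linarith
  have hsq : s * s ≤ s := by
    calc s * s ≤ r * r := mul_le_mul hrs hrs hs0 (le_of_lt hr0)
    _ = s := Real.mul_self_sqrt hs0
  nlinarith
end

section
/- Let ε > 0 and let P₀, …, P_{m−1} be n×n complex matrices that are Hermitian (Pᵢᴴ = Pᵢ), satisfy Pᵢ·Pᵢ = I, and pairwise anticommute (Pᵢ·Pⱼ = −Pⱼ·Pᵢ for i ≠ j). Let ρ be an n×n positive semidefinite Hermitian matrix with tr ρ = 1, and suppose |tr(ρ·Pᵢ)| ≥ ε/2 for every i. Then m ≤ 4/ε². -/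
open Matrix ComplexOrder

private lemma trace_nonneg_of_psd {n : ℕ} {A : Matrix (Fin n) (Fin n) ℂ}
    (hA : A.PosSemidef) : 0 ≤ A.trace := by
  exact hA.trace_nonneg

/-- Clique-size bound: at most 4/ε² pairwise anticommuting Hermitian unitary
observables can each have expectation magnitude at least ε/2 in a density matrix ρ. -/
theorem anticommuting_clique_size_bound {n m : ℕ} (ε : ℝ) (hε : 0 < ε)
    (P : Fin m → Matrix (Fin n) (Fin n) ℂ)
    (hHerm : ∀ i, (P i)ᴴ = P i)
    (hUnit : ∀ i, P i * P i = 1)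
    (hanti : ∀ i j : Fin m, i ≠ j → P i * P j = -(P j * P i))
    (ρ : Matrix (Fin n) (Fin n) ℂ) (hρ : ρ.PosSemidef) (hρtr : Matrix.trace ρ = 1)
    (hbig : ∀ i, ε / 2 ≤ ‖Matrix.trace (ρ * P i)‖) :
    (m : ℝ) ≤ 4 / ε ^ 2 := by
  rcases Nat.eq_zero_or_pos m with hm | hm
  · subst hm
    simp only [Nat.cast_zero]
    positivity
  -- the expectations are real
  set t : Fin m → ℝ := fun i => (Matrix.trace (ρ * P i)).re with ht
  have htc : ∀ i, Matrix.trace (ρ * P i) = (t i : ℂ) := by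
    intro i
    have hconj : (starRingEnd ℂ) (Matrix.trace (ρ * P i)) = Matrix.trace (ρ * P i) := by
      show star (Matrix.trace (ρ * P i)) = _
      rw [← Matrix.trace_conjTranspose, Matrix.conjTranspose_mul, hHerm i, hρ.1.eq,
        Matrix.trace_mul_comm]
    exact ((Complex.conj_eq_iff_re.mp hconj).symm)
  have htabs : ∀ i, ε / 2 ≤ |t i| := by
    intro i
    have := hbig i
    rwa [htc i, Complex.norm_real, Real.norm_eq_abs] at this
  set S : ℝ := ∑ i, (t i) ^ 2 with hS
  -- lower bound on S
  have hSlow : (m : ℝ) * (ε / 2) ^ 2 ≤ S := by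
    rw [hS]
    calc (m : ℝ) * (ε / 2) ^ 2 = ∑ _i : Fin m, (ε / 2) ^ 2 := by
          simp [Finset.sum_const, mul_comm]
      _ ≤ ∑ i, (t i) ^ 2 := by
          apply Finset.sum_le_sum
          intro i _
          have := htabs i
          calc (ε / 2) ^ 2 ≤ |t i| ^ 2 := by
                apply pow_le_pow_left₀ (by positivity) this
            _ = (t i) ^ 2 := sq_abs _
  have hSpos : 0 < S := lt_of_lt_of_le (by positivity) hSlow
  -- the matrix M
  set M : Matrix (Fin n) (Fin n) ℂ := ∑ i, (t i : ℂ) • P i with hM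
  have hMherm : Mᴴ = M := by
    rw [hM, Matrix.conjTranspose_sum]
    apply Finset.sum_congr rfl
    intro i _
    rw [Matrix.conjTranspose_smul, hHerm i]
    simp
  -- M * M = S • 1
  have hf : ∀ i j : Fin m, i ≠ j →
      ((t i : ℂ) * t j) • (P i * P j) + ((t j : ℂ) * t i) • (P j * P i) = 0 := by
    intro i j hij
    rw [hanti i j hij, mul_comm ((t j : ℂ)) (t i : ℂ), smul_neg]
    simp
  have hMsq : M * M = (S : ℂ) • 1 := by
    rw [hM, Finset.sum_mul_sum]
    have step : ∀ i j : Fin m, ((t i : ℂ) • P i) * ((t j : ℂ) • P j)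
        = ((t i : ℂ) * t j) • (P i * P j) := by
      intro i j
      rw [Matrix.smul_mul, Matrix.mul_smul, smul_smul]
    simp_rw [step]
    rw [← Finset.sum_product']
    rw [← Finset.sum_filter_add_sum_filter_not (Finset.univ ×ˢ Finset.univ)
      (fun p : Fin m × Fin m => p.1 = p.2)]
    have hdiag : ∑ p ∈ (Finset.univ ×ˢ Finset.univ).filter
        (fun p : Fin m × Fin m => p.1 = p.2),
        ((t p.1 : ℂ) * t p.2) • (P p.1 * P p.2) = (S : ℂ) • 1 := by
      rw [Finset.sum_filter]
      rw [Finset.sum_product]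
      simp_rw [Finset.sum_ite_eq Finset.univ]
      simp only [Finset.mem_univ, if_true]
      have : ∀ i : Fin m, ((t i : ℂ) * t i) • (P i * P i) = (((t i)^2 : ℝ) : ℂ) • 1 := by
        intro i
        rw [hUnit i]
        push_cast
        ring_nf
      simp_rw [this]
      rw [← Finset.sum_smul]
      congr 1
      push_cast [hS]
      ring
    have hoff : ∑ p ∈ (Finset.univ ×ˢ Finset.univ).filter
        (fun p : Fin m × Fin m => ¬ p.1 = p.2),
        ((t p.1 : ℂ) * t p.2) • (P p.1 * P p.2) = 0 := by
      apply Finset.sum_involution (fun p _ => (p.2, p.1))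
      · intro p hp
        simp only [Finset.mem_filter] at hp
        exact hf p.1 p.2 hp.2
      · intro p hp _
        simp only [Finset.mem_filter] at hp
        intro hcontra
        apply hp.2
        exact (congrArg Prod.snd hcontra)
      · intro p hp
        simp only [Finset.mem_filter, Finset.mem_product, Finset.mem_univ, true_and] at hp ⊢
        exact fun h => hp (h.symm)
      · intro p hp
        rfl
    rw [hdiag, hoff, add_zero]
  -- trace (ρ * M) = S
  have htrM : Matrix.trace (ρ * M) = (S : ℂ) := by
    rw [hM, Matrix.mul_sum]
    simp_rw [Matrix.mul_smul, Matrix.trace_sum, Matrix.trace_smul, htc]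
    rw [hS]
    push_cast
    apply Finset.sum_congr rfl
    intro i _
    rw [smul_eq_mul]
    ring
  -- C := M - S•1
  set C : Matrix (Fin n) (Fin n) ℂ := M - (S : ℂ) • 1 with hC
  have hCherm : Cᴴ = C := by
    rw [hC, Matrix.conjTranspose_sub, hMherm, Matrix.conjTranspose_smul]
    simp
  have hpsd : (C * ρ * Cᴴ).PosSemidef := hρ.mul_mul_conjTranspose_same C
  have htrpos : 0 ≤ Matrix.trace (C * ρ * Cᴴ) := trace_nonneg_of_psd hpsd
  have htrval : Matrix.trace (C * ρ * Cᴴ) = ((S - S^2 : ℝ) : ℂ) := by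
    rw [hCherm, Matrix.trace_mul_cycle]
    have hCC : C * C = ((S + S^2 : ℝ) : ℂ) • 1 - ((2*S : ℝ) : ℂ) • M := by
      rw [hC]
      simp only [Matrix.sub_mul, Matrix.mul_sub, hMsq, Matrix.smul_mul, Matrix.mul_smul,
        Matrix.one_mul, Matrix.mul_one]
      push_cast
      module
    calc Matrix.trace (C * C * ρ) = Matrix.trace (ρ * (C * C)) := by rw [Matrix.trace_mul_comm]
      _ = ((S - S^2 : ℝ) : ℂ) := by
          rw [hCC, Matrix.mul_sub, Matrix.mul_smul, Matrix.mul_smul, Matrix.mul_one,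
            Matrix.trace_sub, Matrix.trace_smul, Matrix.trace_smul, hρtr, htrM]
          push_cast
          simp only [smul_eq_mul]
          ring
  have hSS : S ^ 2 ≤ S := by
    rw [htrval] at htrpos
    have h0 : (0:ℝ) ≤ S - S^2 := Complex.zero_le_real.mp htrpos
    linarith
  have hS1 : S ≤ 1 := by nlinarith
  have : (m : ℝ) * (ε / 2) ^ 2 ≤ 1 := le_trans hSlow hS1
  rw [div_pow] at this
  rw [le_div_iff₀ (by positivity : (0:ℝ) < ε ^ 2)]
  nlinarith
end
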